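/- Ky Fan minimax: Let X be a compact convex subset of a topological vector space and Y a convex subset of a vector space. If f : X × Y → ℝ is such that y ↦ f(x,y) is concave and upper semicontinuous for each x ∈ X, and x ↦ f(x,y) is convex and lower semicontinuous for each y ∈ Y, then min_{x∈X} sup_{y∈Y} f(x,y) = sup_{y∈Y} min_{x∈X} f(x,y). -/

import Mathlib

open Filter Set

lemma lsc_restrict' {X : Type*} [TopologicalSpace X] {f : X → ℝ} {s : Set X}
    (h : LowerSemicontinuousOn f s) : LowerSemicontinuous (fun x : s => f x.1) := by
  intro x y hy
  have h2 := h x.1 x.2 y hy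
  rw [← map_nhds_subtype_val] at h2
  exact h2

lemma lsc_exists_min' {K : Type*} [TopologicalSpace K] [CompactSpace K] [Nonempty K]
    {g : K → ℝ} (hg : LowerSemicontinuous g) : ∃ x, ∀ x', g x ≤ g x' := by
  have h := IsCompact.nonempty_iInter_of_directed_nonempty_isCompact_isClosed
    (fun x : K => {x' | g x' ≤ g x}) ?_ ?_ ?_ ?_
  · obtain ⟨x0, hx0⟩ := h
    exact ⟨x0, fun x' => by simpa using mem_iInter.1 hx0 x'⟩
  · intro a b
    rcases le_total (g a) (g b) with hab | hab
    · exact ⟨a, fun x (hx : g x ≤ g a) => hx, fun x (hx : g x ≤ g a) => le_trans hx hab⟩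
    · exact ⟨b, fun x (hx : g x ≤ g b) => le_trans hx hab, fun x (hx : g x ≤ g b) => hx⟩
  · exact fun x => ⟨x, show g x ≤ g x from le_rfl⟩
  · intro x
    exact (hg.isClosed_preimage (g x)).isCompact
  · intro x
    exact hg.isClosed_preimage (g x)

lemma kyfan_finite {V W : Type*} [AddCommGroup V] [Module ℝ V] [TopologicalSpace V]
    [AddCommGroup W] [Module ℝ W]
    (Xs : Set V) (Ys : Set W) (hXc : IsCompact Xs) (hXconv : Convex ℝ Xs) (hXne : Xs.Nonempty)
    (hYconv : Convex ℝ Ys)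
    (f : V → W → ℝ)
    (hconc : ∀ x ∈ Xs, ConcaveOn ℝ Ys (f x))
    (hconv : ∀ y ∈ Ys, ConvexOn ℝ Xs (fun x => f x y))
    (hlsc : ∀ y ∈ Ys, LowerSemicontinuousOn (fun x => f x y) Xs)
    (c : ℝ)
    (hcc : ∀ y ∈ Ys, ∀ u : ℝ, (∀ x ∈ Xs, u ≤ f x y) → u ≤ c)
    (t : Finset W) (ht : ↑t ⊆ Ys) :
    ∃ x ∈ Xs, ∀ y ∈ t, f x y ≤ c := by
  classical
  by_contra hcon
  push_neg at hcon
  obtain ⟨x0, hx0⟩ := hXne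
  -- index type
  set I := {y // y ∈ t} with hI
  haveI : Nonempty I := by
    obtain ⟨y, hy, -⟩ := hcon x0 hx0
    exact ⟨⟨y, hy⟩⟩
  haveI : CompactSpace Xs := isCompact_iff_compactSpace.1 hXc
  haveI : Nonempty Xs := ⟨⟨x0, hx0⟩⟩
  -- the max function
  set g : Xs → ℝ := fun x => ⨆ i : I, f x.1 i.1 with hgdef
  have hgb : ∀ x : Xs, BddAbove (Set.range fun i : I => f x.1 i.1) :=
    fun x => (Set.finite_range _).bddAbove
  have hglsc : LowerSemicontinuous g := by
    intro x
    exact lowerSemicontinuousAt_ciSup (Eventually.of_forall fun x' => hgb x')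
      (fun i => lsc_restrict' (hlsc i.1 (ht i.2)) x)
  obtain ⟨xm, hxm⟩ := lsc_exists_min' hglsc
  set m := g xm with hm
  have hcm : c < m := by
    obtain ⟨y, hy, hcy⟩ := hcon xm.1 xm.2
    exact hcy.trans_le (le_ciSup (hgb xm) ⟨y, hy⟩)
  -- the convex set in E
  set E := I → ℝ with hE
  set S : Set E := {z | ∃ x ∈ Xs, ∀ i : I, f x i.1 ≤ z i} with hS
  have hSconv : Convex ℝ S := by
    rintro z ⟨x, hx, hz⟩ z' ⟨x', hx', hz'⟩ a b ha hb hab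
    refine ⟨a • x + b • x', hXconv hx hx' ha hb hab, fun i => ?_⟩
    have := (hconv i.1 (ht i.2)).2 hx hx' ha hb hab
    calc f (a • x + b • x') i.1 ≤ a * f x i.1 + b * f x' i.1 := by
          simpa [smul_eq_mul] using this
      _ ≤ a * z i + b * z' i := by
          gcongr
          exacts [hz i, hz' i]
      _ = (a • z + b • z') i := rfl
  -- the point is not in the closure
  have hpt : (fun _ => c : E) ∉ closure S := by
    have hSF : S ⊆ ⋃ i : I, {z : E | m ≤ z i} := by
      rintro z ⟨x, hx, hz⟩
      obtain ⟨i, hi⟩ := exists_eq_ciSup_of_finite (f := fun i : I => f x i.1)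
      refine mem_iUnion.2 ⟨i, ?_⟩
      have h1 : m ≤ f x i.1 := by
        rw [hi]
        exact hxm ⟨x, hx⟩
      exact h1.trans (hz i)
    have hFc : IsClosed (⋃ i : I, {z : E | m ≤ z i}) := by
      refine isClosed_iUnion_of_finite fun i => ?_
      exact isClosed_le continuous_const (continuous_apply i)
    intro hmem
    have := (closure_minimal hSF hFc) hmem
    obtain ⟨i, hi⟩ := mem_iUnion.1 this
    exact absurd (hcm.trans_le hi) (lt_irrefl c)
  obtain ⟨φ, u0, hpu, hSu⟩ :=
    geometric_hahn_banach_point_closed hSconv.closure isClosed_closure hpt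
  -- coordinates of φ
  set e : I → E := fun i => fun j => if i = j then (1 : ℝ) else 0 with he
  set lam : I → ℝ := fun i => φ (e i) with hlam
  have hrep : ∀ z : E, φ z = ∑ i : I, z i * lam i := by
    intro z
    have hz : z = ∑ i : I, z i • e i := pi_eq_sum_univ z
    calc φ z = φ (∑ i : I, z i • e i) := by rw [← hz]
      _ = ∑ i : I, z i * lam i := by
          rw [map_sum]
          simp [smul_eq_mul, hlam]
  set z0 : E := fun i => f x0 i.1 with hz0
  have hz0S : z0 ∈ S := ⟨x0, hx0, fun i => le_rfl⟩
  have hlamnn : ∀ i, 0 ≤ lam i := by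
    intro i
    by_contra hneg
    push_neg at hneg
    set tt : ℝ := max 0 ((u0 - φ z0) / lam i + 1) with htt
    have htt0 : 0 ≤ tt := le_max_left _ _
    have httgt : (u0 - φ z0) / lam i < tt := (lt_add_one _).trans_le (le_max_right _ _)
    have hmul : tt * lam i < u0 - φ z0 := (div_lt_iff_of_neg hneg).1 httgt
    have hzS : z0 + tt • e i ∈ S := by
      refine ⟨x0, hx0, fun j => ?_⟩
      have : (0:ℝ) ≤ tt * e i j := by
        rcases eq_or_ne i j with h | h <;> simp [he, h, htt0]
      calc f x0 j.1 ≤ z0 j + tt * e i j := le_add_of_nonneg_right this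
        _ = (z0 + tt • e i) j := rfl
    have h1 : u0 < φ (z0 + tt • e i) := hSu _ (subset_closure hzS)
    rw [map_add, map_smul, smul_eq_mul] at h1
    linarith
  set Lam : ℝ := ∑ i : I, lam i with hLam
  have hLnn : 0 ≤ Lam := Finset.sum_nonneg fun i _ => hlamnn i
  have hLpos : 0 < Lam := by
    rcases hLnn.lt_or_eq with h | h
    · exact h
    · exfalso
      have hall : ∀ i ∈ Finset.univ, lam i = 0 :=
        (Finset.sum_eq_zero_iff_of_nonneg fun i _ => hlamnn i).1 h.symm
      have hz : ∀ z : E, φ z = 0 := by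
        intro z
        rw [hrep]
        exact Finset.sum_eq_zero fun i _ => by rw [hall i (Finset.mem_univ i), mul_zero]
      have h1 := hSu z0 (subset_closure hz0S)
      rw [hz z0] at h1
      rw [hz _] at hpu
      linarith
  have hφpt : φ (fun _ => c : E) = c * Lam := by
    rw [hrep, hLam, Finset.mul_sum]
  -- the combined y
  set ystar : W := ∑ i : I, (lam i / Lam) • (i.1 : W) with hystar
  have hwnn : ∀ i : I, 0 ≤ lam i / Lam := fun i => div_nonneg (hlamnn i) hLnn
  have hwsum : ∑ i : I, lam i / Lam = 1 := by
    rw [← Finset.sum_div, ← hLam, div_self hLpos.ne']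
  have hyY : ystar ∈ Ys :=
    hYconv.sum_mem (fun i _ => hwnn i) hwsum (fun i _ => ht i.2)
  have key : ∀ x ∈ Xs, u0 / Lam < f x ystar := by
    intro x hx
    have hzS : (fun i => f x i.1 : E) ∈ S := ⟨x, hx, fun i => le_rfl⟩
    have h1 : u0 < ∑ i : I, f x i.1 * lam i := by
      rw [← hrep]
      exact hSu _ (subset_closure hzS)
    have h2 : ∑ i : I, (lam i / Lam) * f x i.1 ≤ f x ystar :=
      (hconc x hx).le_map_sum (fun i _ => hwnn i) hwsum (fun i _ => ht i.2)
    have h3 : ∑ i : I, (lam i / Lam) * f x i.1 = (∑ i : I, f x i.1 * lam i) / Lam := by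
      rw [Finset.sum_div]
      exact Finset.sum_congr rfl fun i _ => by ring
    have h4 : u0 / Lam < (∑ i : I, f x i.1 * lam i) / Lam := by gcongr
    linarith [h2, h3 ▸ h4]
  have hub : u0 / Lam ≤ c := hcc ystar hyY (u0 / Lam) (fun x hx => (key x hx).le)
  have hcu : c < u0 / Lam := by
    rw [lt_div_iff₀ hLpos]
    calc c * Lam = φ (fun _ => c : E) := hφpt.symm
      _ < u0 := hpu
  linarith



/-- Ky Fan minimax theorem: for `Xs` compact convex in a topological vector space and `Ys`
convex, if `f` is concave and upper semicontinuous in its second argument and convex and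
lower semicontinuous in its first argument, then
`inf_{x ∈ Xs} sup_{y ∈ Ys} f x y = sup_{y ∈ Ys} inf_{x ∈ Xs} f x y` (in the extended reals,
the infima over the compact set being attained). -/
theorem stmt_11 {V W : Type*} [AddCommGroup V] [Module ℝ V] [TopologicalSpace V]
    [IsTopologicalAddGroup V] [ContinuousSMul ℝ V]
    [AddCommGroup W] [Module ℝ W] [TopologicalSpace W]
    (Xs : Set V) (Ys : Set W) (hXc : IsCompact Xs) (hXconv : Convex ℝ Xs) (hXne : Xs.Nonempty)
    (hYconv : Convex ℝ Ys) (hYne : Ys.Nonempty)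
    (f : V → W → ℝ)
    (hconc : ∀ x ∈ Xs, ConcaveOn ℝ Ys (f x))
    (husc : ∀ x ∈ Xs, UpperSemicontinuousOn (f x) Ys)
    (hconv : ∀ y ∈ Ys, ConvexOn ℝ Xs (fun x => f x y))
    (hlsc : ∀ y ∈ Ys, LowerSemicontinuousOn (fun x => f x y) Xs) :
    ⨅ x ∈ Xs, ⨆ y ∈ Ys, (f x y : EReal) = ⨆ y ∈ Ys, ⨅ x ∈ Xs, (f x y : EReal) := by
  classical
  haveI : CompactSpace Xs := isCompact_iff_compactSpace.1 hXc
  obtain ⟨x0, hx0⟩ := hXne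
  haveI : Nonempty Xs := ⟨⟨x0, hx0⟩⟩
  have easy : ⨆ y ∈ Ys, ⨅ x ∈ Xs, (f x y : EReal) ≤ ⨅ x ∈ Xs, ⨆ y ∈ Ys, (f x y : EReal) := by
    refine le_iInf₂ fun x hx => iSup₂_le fun y hy => ?_
    exact (iInf₂_le x hx).trans (le_iSup₂ (f := fun y (_ : y ∈ Ys) => ((f x y : ℝ) : EReal)) y hy)
  refine le_antisymm ?_ easy
  set R := ⨆ y ∈ Ys, ⨅ x ∈ Xs, (f x y : EReal) with hR
  by_cases hRtop : R = ⊤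
  · rw [hRtop]; exact le_top
  obtain ⟨y0, hy0⟩ := hYne
  obtain ⟨xm, hxm⟩ := lsc_exists_min' (lsc_restrict' (hlsc y0 hy0))
  have h1 : ((f xm.1 y0 : ℝ) : EReal) ≤ ⨅ x ∈ Xs, (f x y0 : EReal) :=
    le_iInf₂ fun x hx => EReal.coe_le_coe_iff.2 (hxm ⟨x, hx⟩)
  have hRbot : R ≠ ⊥ := by
    have h2 : ((f xm.1 y0 : ℝ) : EReal) ≤ R := h1.trans (le_iSup₂ (f := fun y (_ : y ∈ Ys) => ⨅ x ∈ Xs, ((f x y : ℝ) : EReal)) y0 hy0)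
    intro h
    rw [h, le_bot_iff] at h2
    exact EReal.coe_ne_bot _ h2
  set c := R.toReal with hc
  have hRc : R = (c : EReal) := (R.coe_toReal hRtop hRbot).symm
  have hcc : ∀ y ∈ Ys, ∀ u : ℝ, (∀ x ∈ Xs, u ≤ f x y) → u ≤ c := by
    intro y hy u hu
    have h3 : ((u : ℝ) : EReal) ≤ ⨅ x ∈ Xs, (f x y : EReal) :=
      le_iInf₂ fun x hx => EReal.coe_le_coe_iff.2 (hu x hx)
    have h4 : ((u : ℝ) : EReal) ≤ R := h3.trans (le_iSup₂ (f := fun y (_ : y ∈ Ys) => ⨅ x ∈ Xs, ((f x y : ℝ) : EReal)) y hy)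
    rw [hRc] at h4
    exact EReal.coe_le_coe_iff.1 h4
  set Z : Ys → Set Xs := fun y => {x : Xs | f x.1 y.1 ≤ c} with hZ
  have hZcl : ∀ y : Ys, IsClosed (Z y) := fun y =>
    (lsc_restrict' (hlsc y.1 y.2)).isClosed_preimage c
  have hfin : ∀ u : Finset ↥Ys, (Set.univ ∩ ⋂ y ∈ u, Z y).Nonempty := by
    intro u
    obtain ⟨x, hx, hxall⟩ := kyfan_finite Xs Ys hXc hXconv ⟨x0, hx0⟩ hYconv f hconc hconv hlsc c
      hcc (u.image Subtype.val) (by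
        intro y hy
        obtain ⟨y', hy', rfl⟩ := Finset.mem_image.1 hy
        exact y'.2)
    refine ⟨⟨x, hx⟩, Set.mem_inter (Set.mem_univ _) ?_⟩
    refine Set.mem_iInter₂.2 fun y hy => ?_
    exact hxall y.1 (Finset.mem_image_of_mem _ hy)
  obtain ⟨xs, -, hxs⟩ := isCompact_univ.inter_iInter_nonempty Z hZcl hfin
  have hxs' : ∀ y ∈ Ys, f xs.1 y ≤ c := fun y hy => Set.mem_iInter.1 hxs ⟨y, hy⟩
  calc ⨅ x ∈ Xs, ⨆ y ∈ Ys, (f x y : EReal) ≤ ⨆ y ∈ Ys, (f xs.1 y : EReal) :=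
        iInf₂_le xs.1 xs.2
    _ ≤ (c : EReal) := iSup₂_le fun y hy => EReal.coe_le_coe_iff.2 (hxs' y hy)
    _ = R := hRc.symm
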